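/- Let X be a complex Banach space, U ⊆ X a nonempty open set, n ≥ 1 an integer, and ρ > 0 with ρ ≤ 2 n^{1/2}. Let Ω ⊆ ℂ be an open set containing the strip S_n = {λ ∈ ℂ : |Re λ − n²π²| ≤ 12n} and let a : Ω × U → ℂ be analytic with |a(λ, q)| ≤ ρ for all (λ, q) ∈ S_n × U. Then there exists a unique analytic map α : U → ℂ with |α(q) − n²π²| ≤ ρ for all q ∈ U such that α(q) = n²π² + a(α(q), q) for all q ∈ U. -/

import Mathlib

open Metric Set

/-- The vertical strip `S_n = {λ ∈ ℂ : |Re λ − n²π²| ≤ 12n}`. -/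
def strip (n : ℕ) : Set ℂ :=
  {lam : ℂ | |lam.re - (n : ℝ) ^ 2 * Real.pi ^ 2| ≤ 12 * n}

set_option maxHeartbeats 1000000 in
theorem stmt_19 (X : Type*) [NormedAddCommGroup X] [NormedSpace ℂ X] [CompleteSpace X]
    (U : Set X) (hU : IsOpen U) (hUne : U.Nonempty)
    (n : ℕ) (hn : 1 ≤ n) (ρ : ℝ) (hρ : 0 < ρ) (hρn : ρ ≤ 2 * (n : ℝ) ^ ((1 : ℝ) / 2))
    (Ω : Set ℂ) (hΩ : IsOpen Ω) (hSΩ : strip n ⊆ Ω)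
    (a : ℂ × X → ℂ) (ha : AnalyticOnNhd ℂ a (Ω ×ˢ U))
    (hbound : ∀ lam ∈ strip n, ∀ q ∈ U, ‖a (lam, q)‖ ≤ ρ) :
    ∃ α : X → ℂ, AnalyticOnNhd ℂ α U ∧
      (∀ q ∈ U, ‖α q - (n : ℂ) ^ 2 * (Real.pi : ℂ) ^ 2‖ ≤ ρ) ∧
      (∀ q ∈ U, α q = (n : ℂ) ^ 2 * (Real.pi : ℂ) ^ 2 + a (α q, q)) ∧
      ∀ β : X → ℂ, AnalyticOnNhd ℂ β U →
        (∀ q ∈ U, ‖β q - (n : ℂ) ^ 2 * (Real.pi : ℂ) ^ 2‖ ≤ ρ) →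
        (∀ q ∈ U, β q = (n : ℂ) ^ 2 * (Real.pi : ℂ) ^ 2 + a (β q, q)) →
        ∀ q ∈ U, β q = α q := by
  classical
  have h1n : (1:ℝ) ≤ (n:ℝ) := by exact_mod_cast hn
  have hnpos : (0:ℝ) < (n:ℝ) := by linarith
  have hsqn : (n:ℝ) ^ ((1:ℝ)/2) ≤ (n:ℝ) := by
    have h := Real.rpow_le_rpow_of_exponent_le h1n (by norm_num : (1:ℝ)/2 ≤ 1)
    rwa [Real.rpow_one] at h
  have hρ2n : ρ ≤ 2 * (n:ℝ) := by nlinarith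
  set c : ℂ := (((n:ℝ)^2 * Real.pi^2 : ℝ) : ℂ) with hc
  have hcC : (n : ℂ) ^ 2 * (Real.pi : ℂ) ^ 2 = c := by rw [hc]; push_cast; ring
  have hcre : c.re = (n:ℝ)^2 * Real.pi^2 := by rw [hc]; exact Complex.ofReal_re _
  -- membership in the strip
  have hmem : ∀ z : ℂ, ‖z - c‖ ≤ 12 * n → z ∈ strip n := by
    intro z hz
    have h1 : |(z - c).re| ≤ ‖z - c‖ := Complex.abs_re_le_norm _
    have h2 : (z - c).re = z.re - (n:ℝ)^2 * Real.pi^2 := by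
      simp [Complex.sub_re, hcre]
    simp only [strip, Set.mem_setOf_eq]
    rw [← h2]
    exact h1.trans hz
  -- analyticity of slices
  have haslice : ∀ q ∈ U, ∀ z ∈ Ω, AnalyticAt ℂ (fun w : ℂ => a (w, q)) z := by
    intro q hq z hz
    have hin : AnalyticAt ℂ (fun w : ℂ => ((w, q) : ℂ × X)) z :=
      analyticAt_id.prod analyticAt_const
    exact AnalyticAt.comp (f := fun w : ℂ => ((w, q) : ℂ × X)) (ha (z, q) ⟨hz, hq⟩) hin
  have hball_strip : ∀ lam : ℂ, ‖lam - c‖ ≤ (3/2)*ρ →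
      ∀ z ∈ Metric.ball lam (8*(n:ℝ)), z ∈ strip n := by
    intro lam hlam z hz
    apply hmem
    have h1 : ‖z - lam‖ < 8*n := by rwa [Metric.mem_ball, Complex.dist_eq] at hz
    calc ‖z - c‖ ≤ ‖z - lam‖ + ‖lam - c‖ :=
          norm_sub_le_norm_sub_add_norm_sub z lam c
      _ ≤ 12 * n := by nlinarith
  have hdiffmap : ∀ q ∈ U, ∀ lam : ℂ, ‖lam - c‖ ≤ (3/2)*ρ →
      DifferentiableOn ℂ (fun w : ℂ => a (w, q)) (Metric.ball lam (8*(n:ℝ))) ∧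
      Set.MapsTo (fun w : ℂ => a (w, q)) (Metric.ball lam (8*(n:ℝ)))
        (Metric.ball (a (lam, q)) (2*ρ+1)) := by
    intro q hq lam hlam
    have hstr := hball_strip lam hlam
    constructor
    · intro z hz
      exact ((haslice q hq z (hSΩ (hstr z hz))).differentiableAt).differentiableWithinAt
    · intro z hz
      rw [Metric.mem_ball, Complex.dist_eq]
      have hlam' : lam ∈ strip n := hmem lam (hlam.trans (by nlinarith))
      have b1 := hbound z (hstr z hz) q hq
      have b2 := hbound lam hlam' q hq
      calc ‖a (z,q) - a (lam,q)‖ ≤ ‖a (z,q)‖ + ‖a (lam,q)‖ := by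
            exact norm_sub_le (a (z,q)) (a (lam,q))
        _ < 2*ρ+1 := by linarith
  have h8n : (0:ℝ) < 8*(n:ℝ) := by linarith
  have hratio : (2*ρ+1)/(8*(n:ℝ)) ≤ 7/8 := by
    rw [div_le_iff₀ h8n]; nlinarith
  -- Lipschitz-type bound from the Schwarz lemma
  have key : ∀ q ∈ U, ∀ lam : ℂ, ‖lam - c‖ ≤ (3/2)*ρ →
      ∀ mu : ℂ, ‖mu - c‖ ≤ (3/2)*ρ →
      dist (a (mu, q)) (a (lam, q)) ≤ (7/8) * dist mu lam := by
    intro q hq lam hlam mu hmu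
    obtain ⟨hd, hm⟩ := hdiffmap q hq lam hlam
    have hz : mu ∈ Metric.ball lam (8*(n:ℝ)) := by
      rw [Metric.mem_ball, Complex.dist_eq]
      calc ‖mu - lam‖ ≤ ‖mu - c‖ + ‖c - lam‖ :=
            norm_sub_le_norm_sub_add_norm_sub mu c lam
        _ = ‖mu - c‖ + ‖lam - c‖ := by rw [norm_sub_rev c lam]
        _ < 8*n := by nlinarith
    have hS := Complex.dist_le_div_mul_dist_of_mapsTo_ball hd (hm.mono_right Metric.ball_subset_closedBall) hz
    exact hS.trans (mul_le_mul_of_nonneg_right hratio dist_nonneg)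
  -- uniqueness of fixed points
  have huniq : ∀ q ∈ U, ∀ lam : ℂ, ‖lam - c‖ ≤ (3/2)*ρ →
      ∀ mu : ℂ, ‖mu - c‖ ≤ (3/2)*ρ →
      lam = c + a (lam, q) → mu = c + a (mu, q) → lam = mu := by
    intro q hq lam hlam mu hmu he1 he2
    have hd : dist lam mu ≤ (7/8) * dist lam mu := by
      calc dist lam mu = dist (c + a (lam, q)) (c + a (mu, q)) := by rw [← he1, ← he2]
        _ = dist (a (lam, q)) (a (mu, q)) := dist_add_left c _ _
        _ ≤ (7/8) * dist lam mu := key q hq mu hmu lam hlam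
    have h0 : dist lam mu ≤ 0 := by linarith
    exact dist_le_zero.mp h0
  have hsub : ∀ z ∈ Metric.closedBall c ρ, z ∈ strip n := by
    intro z hz
    rw [Metric.mem_closedBall, Complex.dist_eq] at hz
    exact hmem z (hz.trans (by nlinarith))
  -- existence of fixed points via Banach
  have hexists : ∀ q ∈ U, ∃ lam : ℂ, lam ∈ Metric.closedBall c ρ ∧ lam = c + a (lam, q) := by
    intro q hq
    haveI : CompleteSpace (Metric.closedBall c ρ) :=
      (Metric.isClosed_closedBall (x := c) (ε := ρ)).completeSpace_coe
    haveI : Nonempty (Metric.closedBall c ρ) := ⟨⟨c, Metric.mem_closedBall_self hρ.le⟩⟩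
    have hmapsD : ∀ x : Metric.closedBall c ρ, c + a ((x:ℂ), q) ∈ Metric.closedBall c ρ := by
      intro x
      have hx : (x:ℂ) ∈ strip n := hsub _ x.2
      have hb := hbound _ hx q hq
      rw [Metric.mem_closedBall, Complex.dist_eq]
      simpa using hb
    set φ : Metric.closedBall c ρ → Metric.closedBall c ρ :=
      fun x => ⟨c + a ((x:ℂ), q), hmapsD x⟩ with hφdef
    have hball15 : ∀ x : Metric.closedBall c ρ, ‖(x:ℂ) - c‖ ≤ (3/2)*ρ := by
      intro x
      have := x.2
      rw [Metric.mem_closedBall, Complex.dist_eq] at this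
      nlinarith
    have hφ : ContractingWith (7/8 : NNReal) φ := by
      constructor
      · rw [← NNReal.coe_lt_coe]; norm_num
      · apply LipschitzWith.of_dist_le_mul
        intro x y
        calc dist (φ x) (φ y) = dist ((φ x : ℂ)) ((φ y : ℂ)) := Subtype.dist_eq _ _
          _ = dist (a ((x:ℂ), q)) (a ((y:ℂ), q)) := dist_add_left c _ _
          _ ≤ (7/8) * dist (x:ℂ) (y:ℂ) := key q hq _ (hball15 y) _ (hball15 x)
          _ = (7/8 : NNReal) * dist x y := by rw [Subtype.dist_eq]; norm_num
    set x : Metric.closedBall c ρ := ContractingWith.fixedPoint φ hφ with hx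
    refine ⟨(x : ℂ), x.2, ?_⟩
    have hfix : φ x = x := hφ.fixedPoint_isFixedPt
    exact (congrArg Subtype.val hfix).symm
  -- define α
  have Hch : ∀ q : X, ∃ lam : ℂ,
      q ∈ U → (lam ∈ Metric.closedBall c ρ ∧ lam = c + a (lam, q)) := by
    intro q
    by_cases hq : q ∈ U
    · obtain ⟨lam, h1, h2⟩ := hexists q hq; exact ⟨lam, fun _ => ⟨h1, h2⟩⟩
    · exact ⟨c, fun h => absurd h hq⟩
  choose α hα using Hch
  have hαmem : ∀ q ∈ U, ‖α q - c‖ ≤ ρ := by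
    intro q hq
    have := (hα q hq).1
    rwa [Metric.mem_closedBall, Complex.dist_eq] at this
  have hαeq : ∀ q ∈ U, α q = c + a (α q, q) := fun q hq => (hα q hq).2
  -- analyticity of α
  have hanalytic : AnalyticOnNhd ℂ α U := by
    intro q₀ hq₀
    set lam₀ : ℂ := α q₀ with hlam₀
    have hmem0 : ‖lam₀ - c‖ ≤ ρ := hαmem q₀ hq₀
    have heq0 : lam₀ = c + a (lam₀, q₀) := hαeq q₀ hq₀
    have hlamst : lam₀ ∈ strip n := by
      apply hmem; nlinarith
    have haA : AnalyticAt ℂ a (lam₀, q₀) := ha _ ⟨hSΩ hlamst, hq₀⟩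
    set A : ℂ × X →L[ℂ] ℂ := fderiv ℂ a (lam₀, q₀) with hA
    have hm0 : ‖lam₀ - c‖ ≤ (3/2)*ρ := by nlinarith
    -- derivative bound
    have hderA : HasDerivAt (fun w : ℂ => a (w, q₀)) (A (1, 0)) lam₀ := by
      have h1 : HasFDerivAt a A (lam₀, q₀) := haA.differentiableAt.hasFDerivAt
      have h2 : HasFDerivAt (fun w : ℂ => (w, q₀))
          ((ContinuousLinearMap.id ℂ ℂ).prod (0 : ℂ →L[ℂ] X)) lam₀ :=
        HasFDerivAt.prodMk (hasFDerivAt_id lam₀) (hasFDerivAt_const q₀ lam₀)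
      have h3 := h1.comp lam₀ h2
      have h4 := h3.hasDerivAt
      exact h4
    have hAbound : ‖A (1, 0)‖ ≤ 7/8 := by
      obtain ⟨hd, hm⟩ := hdiffmap q₀ hq₀ lam₀ hm0
      have hS := Complex.norm_deriv_le_div_of_mapsTo_ball hd (hm.mono_right Metric.ball_subset_closedBall) h8n
      rw [hderA.deriv] at hS
      exact hS.trans hratio
    set s : ℂ := A (1, 0) with hs
    have ht : (1:ℂ) - s ≠ 0 := by
      intro h
      have hs1 : s = 1 := by
        have := sub_eq_zero.mp h
        exact this.symm
      rw [hs1] at hAbound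
      norm_num at hAbound
    set B : X →L[ℂ] ℂ := A.comp (ContinuousLinearMap.inr ℂ ℂ X) with hB
    have hAdec : ∀ (μ : ℂ) (v : X), A (μ, v) = μ * s + B v := by
      intro μ v
      have h1 : (μ, v) = μ • ((1:ℂ), (0:X)) + ((0:ℂ), v) := by
        simp [Prod.ext_iff]
      rw [h1, map_add, map_smul, smul_eq_mul]
      simp [hB, hs]
    set fwd : ℂ × X →L[ℂ] ℂ × X :=
      ((ContinuousLinearMap.fst ℂ ℂ X) - A).prod (ContinuousLinearMap.snd ℂ ℂ X) with hfwd
    set bwd : ℂ × X →L[ℂ] ℂ × X :=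
      (((1:ℂ) - s)⁻¹ • ((ContinuousLinearMap.fst ℂ ℂ X) +
        B.comp (ContinuousLinearMap.snd ℂ ℂ X))).prod (ContinuousLinearMap.snd ℂ ℂ X) with hbwd
    have hfwd_apply : ∀ p : ℂ × X, fwd p = (p.1 - A p, p.2) := by
      intro p; simp only [hfwd, ContinuousLinearMap.prod_apply, ContinuousLinearMap.sub_apply, ContinuousLinearMap.coe_fst', ContinuousLinearMap.coe_snd', ContinuousLinearMap.smul_apply, ContinuousLinearMap.add_apply, ContinuousLinearMap.comp_apply, smul_eq_mul]
    have hbwd_apply : ∀ p : ℂ × X, bwd p = (((1:ℂ) - s)⁻¹ * (p.1 + B p.2), p.2) := by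
      intro p; simp only [hbwd, ContinuousLinearMap.prod_apply, ContinuousLinearMap.sub_apply, ContinuousLinearMap.coe_fst', ContinuousLinearMap.coe_snd', ContinuousLinearMap.smul_apply, ContinuousLinearMap.add_apply, ContinuousLinearMap.comp_apply, smul_eq_mul]
    have hli : Function.LeftInverse bwd fwd := by
      intro p
      obtain ⟨μ, v⟩ := p
      rw [hfwd_apply, hbwd_apply]
      refine Prod.ext ?_ rfl
      simp only
      rw [hAdec μ v]
      field_simp
      ring
    have hri : Function.RightInverse bwd fwd := by
      intro p
      obtain ⟨w, v⟩ := p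
      rw [hbwd_apply, hfwd_apply]
      refine Prod.ext ?_ rfl
      simp only
      rw [hAdec (((1:ℂ) - s)⁻¹ * (w + B v)) v]
      field_simp
      ring
    set e : (ℂ × X) ≃L[ℂ] (ℂ × X) := ContinuousLinearEquiv.equivOfInverse fwd bwd hli hri with he
    have hcoe : (e : (ℂ × X) →L[ℂ] (ℂ × X)) = fwd := rfl
    set G : ℂ × X → ℂ × X := fun p => (p.1 - c - a p, p.2) with hG
    have hGs : HasStrictFDerivAt G (e : (ℂ × X) →L[ℂ] (ℂ × X)) (lam₀, q₀) := by
      rw [hcoe, hfwd]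
      exact HasStrictFDerivAt.prodMk ((hasStrictFDerivAt_fst.sub_const c).sub haA.hasStrictFDerivAt)
        hasStrictFDerivAt_snd
    set F := HasStrictFDerivAt.toOpenPartialHomeomorph G hGs with hF
    have h0 : (lam₀, q₀) ∈ F.source := HasStrictFDerivAt.mem_toOpenPartialHomeomorph_source hGs
    have hGanalytic : AnalyticAt ℂ G (lam₀, q₀) :=
      ((analyticAt_fst.sub analyticAt_const).sub haA).prod analyticAt_snd
    obtain ⟨pser, hpser⟩ := hGanalytic
    have hp1 : pser 1 =
        (continuousMultilinearCurryFin1 ℂ (ℂ × X) (ℂ × X)).symm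
          (e : (ℂ × X) →L[ℂ] (ℂ × X)) := by
      have hd1 := hpser.hasFDerivAt
      have hd2 := hGs.hasFDerivAt
      have hu := hd1.unique hd2
      have hu2 := congrArg (continuousMultilinearCurryFin1 ℂ (ℂ × X) (ℂ × X)).symm hu
      rwa [LinearIsometryEquiv.symm_apply_apply] at hu2
    have hpserF : HasFPowerSeriesAt (F : ℂ × X → ℂ × X) pser (lam₀, q₀) := hpser
    have hsymm := F.hasFPowerSeriesAt_symm h0 hpserF hp1
    have hFpt : F (lam₀, q₀) = ((0:ℂ), q₀) := by
      show G (lam₀, q₀) = ((0:ℂ), q₀)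
      rw [hG]
      simp only
      refine Prod.ext ?_ rfl
      simp only
      rw [sub_sub, ← heq0, sub_self]
    rw [hFpt] at hsymm
    have hsymm' : AnalyticAt ℂ (F.symm : ℂ × X → ℂ × X) ((0:ℂ), q₀) := ⟨_, hsymm⟩
    have hβ : AnalyticAt ℂ (fun q : X => ((F.symm ((0:ℂ), q)) : ℂ × X).1) q₀ := by
      have h1 : AnalyticAt ℂ (fun q : X => (((0:ℂ), q) : ℂ × X)) q₀ :=
        analyticAt_const.prod analyticAt_id
      have h2 : AnalyticAt ℂ (fun q : X => (F.symm ((0:ℂ), q) : ℂ × X)) q₀ := hsymm'.comp h1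
      exact analyticAt_fst.comp h2
    have hsymmpt : (F.symm ((0:ℂ), q₀) : ℂ × X) = (lam₀, q₀) := by
      rw [← hFpt]; exact F.left_inv h0
    have htgt : (((0:ℂ), q₀) : ℂ × X) ∈ F.target := by
      rw [← hFpt]; exact F.map_source h0
    have e2 : ∀ᶠ q in nhds q₀, (((0:ℂ), q) : ℂ × X) ∈ F.target := by
      have hcont : ContinuousAt (fun q : X => (((0:ℂ), q) : ℂ × X)) q₀ :=
        (continuous_const.prodMk continuous_id).continuousAt
      exact hcont.preimage_mem_nhds (F.open_target.mem_nhds htgt)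
    have e3 : ∀ᶠ q in nhds q₀,
        ‖((F.symm ((0:ℂ), q)) : ℂ × X).1 - c‖ ≤ (3/2)*ρ := by
      have hcontβ : ContinuousAt (fun q : X => ((F.symm ((0:ℂ), q)) : ℂ × X).1) q₀ :=
        hβ.continuousAt
      have hval : ((F.symm ((0:ℂ), q₀)) : ℂ × X).1 ∈ Metric.ball c ((3/2)*ρ) := by
        rw [hsymmpt]
        rw [Metric.mem_ball, Complex.dist_eq]
        nlinarith
      filter_upwards [hcontβ.preimage_mem_nhds (Metric.isOpen_ball.mem_nhds hval)] with q hq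
      rw [Set.mem_preimage, Metric.mem_ball, Complex.dist_eq] at hq
      exact hq.le
    have hev : ∀ᶠ q in nhds q₀, ((F.symm ((0:ℂ), q)) : ℂ × X).1 = α q := by
      filter_upwards [hU.mem_nhds hq₀, e2, e3] with q hqU hqT hqB
      set z : ℂ × X := F.symm ((0:ℂ), q) with hzdef
      have hFz : F z = (((0:ℂ), q) : ℂ × X) := F.right_inv hqT
      have hGz : G z = (((0:ℂ), q) : ℂ × X) := hFz
      have hz1 : z.1 - c - a z = 0 := congrArg Prod.fst hGz
      have hz2 : z.2 = q := congrArg Prod.snd hGz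
      have hzz : z = (z.1, q) := by rw [← hz2]
      have hza : a z = a (z.1, q) := by rw [hzz]
      have hfix : z.1 = c + a (z.1, q) := by
        rw [hza, sub_sub] at hz1
        exact sub_eq_zero.mp hz1
      have hαmem' : ‖α q - c‖ ≤ (3/2)*ρ := by
        have := hαmem q hqU
        nlinarith
      exact huniq q hqU z.1 hqB (α q) hαmem' hfix (hαeq q hqU)
    exact hβ.congr hev
  refine ⟨α, hanalytic, ?_, ?_, ?_⟩
  · intro q hq; rw [hcC]; exact hαmem q hq
  · intro q hq; rw [hcC]; exact hαeq q hq
  · intro β hβan hβb hβe q hq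
    have h1 : ‖β q - c‖ ≤ (3/2)*ρ := by
      have := hβb q hq; rw [hcC] at this; nlinarith
    have h2 : ‖α q - c‖ ≤ (3/2)*ρ := by
      have := hαmem q hq; nlinarith
    have h3 : β q = c + a (β q, q) := by rw [← hcC]; exact hβe q hq
    exact huniq q hq (β q) h1 (α q) h2 h3 (hαeq q hq)
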